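/- Let Z be a compact abelian group with Haar probability measure m, and let R(z) = z + α be an ergodic rotation (i.e., m is ergodic for R). Let 2Z = {z + z : z ∈ Z} with Haar measure ξ. Then Z = 2Z ∪ (2Z + α), and m = (1/2)(ξ + Rξ) if 2Z ≠ Z, while m = ξ if 2Z = Z. In particular, for every w ∈ Z there exists z ∈ Z such that w = 2z or w = 2z + α. -/

import Mathlib

open MeasureTheory
open scoped ENNReal

/-- An ergodic rotation has dense orbit: every nonempty open set contains some `j • α`. -/
private lemma ergodic_rotation_orbit_dense
    {Z : Type*} [MetricSpace Z] [CompactSpace Z] [AddCommGroup Z]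
    [IsTopologicalAddGroup Z] [MeasurableSpace Z] [BorelSpace Z]
    (m : Measure Z) [IsProbabilityMeasure m] [m.IsAddHaarMeasure]
    (α : Z) (hR : Ergodic (fun z => z + α) m)
    (x : Z) (N : Set Z) (hNopen : IsOpen N) (hxN : x ∈ N) :
    ∃ j : ℤ, j • α ∈ N := by
  -- choose a small open neighborhood V of 0 with x + V - V ⊆ N
  have hcont : Continuous (fun p : Z × Z => x + p.1 - p.2) := by fun_prop
  have htend : Filter.Tendsto (fun p : Z × Z => x + p.1 - p.2) (nhds ((0 : Z), (0 : Z)))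
      (nhds x) := by
    have := hcont.tendsto ((0 : Z), (0 : Z))
    simpa using this
  have hmem : (fun p : Z × Z => x + p.1 - p.2) ⁻¹' N ∈ nhds ((0 : Z), (0 : Z)) :=
    htend (hNopen.mem_nhds hxN)
  rw [nhds_prod_eq] at hmem
  obtain ⟨U, hU, T, hT, hUT⟩ := Filter.mem_prod_iff.mp hmem
  obtain ⟨V, hVsub, hVopen, hV0⟩ := mem_nhds_iff.mp (Filter.inter_mem hU hT)
  have hVN : ∀ v ∈ V, ∀ v' ∈ V, x + v - v' ∈ N := by
    intro v hv v' hv'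
    exact hUT (Set.mk_mem_prod (hVsub hv).1 (hVsub hv').2)
  -- the invariant open set W
  set W : Set Z := ⋃ n : ℤ, (fun z => z + n • α) ⁻¹' V with hW
  have hWopen : IsOpen W :=
    isOpen_iUnion fun n => hVopen.preimage (by fun_prop)
  have hWinv : (fun z => z + α) ⁻¹' W = W := by
    ext z
    simp only [hW, Set.mem_iUnion, Set.mem_preimage]
    constructor
    · rintro ⟨n, hn⟩
      refine ⟨n + 1, ?_⟩
      have : z + (n + 1) • α = z + α + n • α := by
        rw [add_zsmul, one_zsmul]; abel
      rwa [this]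
    · rintro ⟨n, hn⟩
      refine ⟨n - 1, ?_⟩
      have : z + α + (n - 1) • α = z + n • α := by
        rw [sub_zsmul, one_zsmul]; abel
      rwa [this]
  have hWc : m Wᶜ = 0 := by
    rcases hR.ae_empty_or_univ hWopen.measurableSet hWinv with h | h
    · exfalso
      have hVW : V ⊆ W := by
        intro v hv
        simp only [hW, Set.mem_iUnion, Set.mem_preimage]
        exact ⟨0, by simpa using hv⟩
      have hpos : 0 < m W :=
        lt_of_lt_of_le (hVopen.measure_pos m ⟨0, hV0⟩) (measure_mono hVW)
      rw [ae_eq_empty.mp h] at hpos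
      exact lt_irrefl _ hpos
    · exact ae_eq_univ.mp h
  -- the translated set
  set W₂ : Set Z := (fun z => x + z) ⁻¹' W with hW₂
  have hW₂c : m W₂ᶜ = 0 := by
    have : W₂ᶜ = (fun z => x + z) ⁻¹' Wᶜ := rfl
    rw [this, measure_preimage_add]
    exact hWc
  -- W ∩ W₂ is conull, hence nonempty
  have hcc : m (W ∩ W₂)ᶜ = 0 := by
    have hsub : (W ∩ W₂)ᶜ ⊆ Wᶜ ∪ W₂ᶜ := by rw [Set.compl_inter]
    refine measure_mono_null hsub ?_
    have h := measure_union_le (μ := m) Wᶜ W₂ᶜ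
    rw [hWc, hW₂c, add_zero] at h
    exact le_antisymm h bot_le
  have hne : (W ∩ W₂).Nonempty := by
    rw [Set.nonempty_iff_ne_empty]
    intro h
    rw [h, Set.compl_empty, measure_univ] at hcc
    exact one_ne_zero hcc
  obtain ⟨z, hzW, hzW₂⟩ := hne
  simp only [hW, Set.mem_iUnion, Set.mem_preimage] at hzW
  obtain ⟨n, hn⟩ := hzW
  have hxz : x + z ∈ W := hzW₂
  simp only [hW, Set.mem_iUnion, Set.mem_preimage] at hxz
  obtain ⟨k, hk⟩ := hxz
  refine ⟨n - k, ?_⟩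
  have key : x + (z + n • α) - (x + z + k • α) = (n - k) • α := by
    rw [sub_zsmul]; abel
  have := hVN _ hn _ hk
  rwa [key] at this

/-- for an ergodic rotation `R(z) = z + α` on a compact abelian group `Z`
with Haar probability measure `m`, letting `ξ = (z ↦ z + z)_* m` be the Haar probability
measure of the closed subgroup `2Z = {z + z : z ∈ Z}` (viewed on `Z`), one has
`Z = 2Z ∪ (2Z + α)`; moreover `m = ξ` if `2Z = Z`, and `m = (1/2)(ξ + Rξ)` otherwise. -/
theorem ergodic_rotation_doubling
    {Z : Type*} [MetricSpace Z] [CompactSpace Z] [AddCommGroup Z]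
    [IsTopologicalAddGroup Z] [MeasurableSpace Z] [BorelSpace Z]
    (m : Measure Z) [IsProbabilityMeasure m] [m.IsAddHaarMeasure]
    (α : Z) (hR : Ergodic (fun z => z + α) m)
    (ξ : Measure Z) (hξ : ξ = m.map (fun z => z + z)) :
    (∀ w : Z, ∃ z : Z, w = z + z ∨ w = z + z + α) ∧
    (Set.range (fun z : Z => z + z) = Set.univ → m = ξ) ∧
    (Set.range (fun z : Z => z + z) ≠ Set.univ →
      m = (2 : ℝ≥0∞)⁻¹ • (ξ + ξ.map (fun z => z + α))) := by
  have hcd : Continuous (fun z : Z => z + z) := continuous_id.add continuous_id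
  have hmd : Measurable (fun z : Z => z + z) := hcd.measurable
  -- Part 1: Z = 2Z ∪ (2Z + α)
  have part1 : ∀ w : Z, ∃ z : Z, w = z + z ∨ w = z + z + α := by
    intro w
    set C : Set Z := Set.range (fun z : Z => z + z) ∪ Set.range (fun z : Z => z + z + α)
      with hC
    have hCclosed : IsClosed C :=
      ((isCompact_range hcd).isClosed).union
        ((isCompact_range (hcd.add continuous_const)).isClosed)
    have horbit : ∀ j : ℤ, j • α ∈ C := by
      intro j
      rcases Int.even_or_odd j with ⟨q, hq⟩ | ⟨q, hq⟩
      · exact Or.inl ⟨q • α, by rw [hq, add_zsmul]⟩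
      · refine Or.inr ⟨q • α, ?_⟩
        rw [hq, add_zsmul, two_mul, add_zsmul, one_zsmul]
    have hwC : w ∈ C := by
      by_contra hw
      obtain ⟨j, hj⟩ := ergodic_rotation_orbit_dense m α hR w Cᶜ
        hCclosed.isOpen_compl hw
      exact hj (horbit j)
    rcases hwC with ⟨z, hz⟩ | ⟨z, hz⟩
    · exact ⟨z, Or.inl hz.symm⟩
    · exact ⟨z, Or.inr hz.symm⟩
  refine ⟨part1, ?_, ?_⟩
  -- Part 2: if doubling is surjective, m = ξ
  · intro hrange
    have hsurj : Function.Surjective (fun z : Z => z + z) := Set.range_eq_univ.mp hrange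
    let f : Z →+ Z := AddMonoidHom.mk' (fun z => z + z) (fun a b => by
      show (a + b) + (a + b) = (a + a) + (b + b); abel)
    have hmp : MeasurePreserving f m m :=
      f.measurePreserving (μ := m) (ν := m) hcd hsurj rfl
    rw [hξ]
    exact hmp.map_eq.symm
  -- Part 3
  · intro _
    -- translation-invariance computations
    have hA : ∀ c : Z, ξ.map (fun z => (c + c) + z) = ξ := by
      intro c
      rw [hξ, Measure.map_map (measurable_const_add _) hmd]
      have hcomp : ((fun z : Z => (c + c) + z) ∘ (fun z : Z => z + z))
          = (fun z : Z => z + z) ∘ (fun z : Z => c + z) := by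
        funext z; show (c + c) + (z + z) = (c + z) + (c + z); abel
      rw [hcomp, ← Measure.map_map hmd (measurable_const_add c),
        map_add_left_eq_self m c]
    have hB : ∀ c : Z, ξ.map (fun z => (c + c + α) + z) = ξ.map (fun z => z + α) := by
      intro c
      have hcomp : (fun z : Z => (c + c + α) + z)
          = (fun z : Z => z + α) ∘ (fun z : Z => (c + c) + z) := by
        funext z; show (c + c + α) + z = ((c + c) + z) + α; abel
      rw [hcomp, ← Measure.map_map (measurable_add_const α) (measurable_const_add _), hA c]
    have hCmap : ∀ c : Z, (ξ.map (fun z => z + α)).map (fun z => (c + c) + z)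
        = ξ.map (fun z => z + α) := by
      intro c
      rw [Measure.map_map (measurable_const_add _) (measurable_add_const α)]
      have hcomp : ((fun z : Z => (c + c) + z) ∘ (fun z : Z => z + α))
          = (fun z : Z => z + α) ∘ (fun z : Z => (c + c) + z) := by
        funext z; show (c + c) + (z + α) = ((c + c) + z) + α; abel
      rw [hcomp, ← Measure.map_map (measurable_add_const α) (measurable_const_add _), hA c]
    have hDmap : ∀ c : Z, (ξ.map (fun z => z + α)).map (fun z => (c + c + α) + z) = ξ := by
      intro c
      rw [Measure.map_map (measurable_const_add _) (measurable_add_const α)]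
      have hcomp : ((fun z : Z => (c + c + α) + z) ∘ (fun z : Z => z + α))
          = (fun z : Z => ((c + α) + (c + α)) + z) := by
        funext z; show (c + c + α) + (z + α) = ((c + α) + (c + α)) + z; abel
      rw [hcomp, hA (c + α)]
    set ν : Measure Z := (2 : ℝ≥0∞)⁻¹ • (ξ + ξ.map (fun z => z + α)) with hν
    have hξprob : IsProbabilityMeasure ξ := by
      rw [hξ]; exact Measure.isProbabilityMeasure_map hmd.aemeasurable
    have hξαprob : IsProbabilityMeasure (ξ.map (fun z => z + α)) :=
      Measure.isProbabilityMeasure_map (measurable_add_const α).aemeasurable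
    have hνprob : IsProbabilityMeasure ν := by
      constructor
      rw [hν]
      simp only [Measure.smul_apply, Measure.add_apply, measure_univ, smul_eq_mul]
      rw [one_add_one_eq_two, ENNReal.inv_mul_cancel two_ne_zero ENNReal.ofNat_ne_top]
    have hνinv : ν.IsAddLeftInvariant := by
      constructor
      intro b
      obtain ⟨c, hc | hc⟩ := part1 b
      · subst hc
        rw [hν, Measure.map_smul,
          Measure.map_add _ _ (measurable_const_add _), hA c, hCmap c]
      · subst hc
        rw [hν, Measure.map_smul,
          Measure.map_add _ _ (measurable_const_add _), hB c, hDmap c]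
        rw [add_comm (ξ.map fun z => z + α) ξ]
    haveI := hνprob
    haveI := hνinv
    have key : ν = (Measure.addHaarScalarFactor ν m) • m :=
      Measure.isAddLeftInvariant_eq_smul ν m
    have h1 : ν Set.univ = 1 := measure_univ
    rw [key] at h1
    simp only [Measure.smul_apply, measure_univ, smul_eq_mul, mul_one,
      ENNReal.smul_def] at h1
    have hc1 : Measure.addHaarScalarFactor ν m = 1 := by
      exact_mod_cast h1
    rw [key, hc1, one_smul]
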